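/- For the merge operation on label-indexed branching trees (merging branching nodes by taking the union of their label maps and recursively merging on common labels, and requiring equality elsewhere), merge B B' = B' whenever every branch structure of B is included in B' (i.e., the 'branch-inclusion' preorder B ⊑ B' holds); consequently ⊑ is a partial order on trees up to the equivalence generated by merge, with merge B B' being the least upper bound of B and B' when it exists. -/

import Mathlib

/-- Behaviour trees: non-branching constructor nodes with a list of children,
and branching nodes carrying a (label-indexed) map from labels to subtrees. -/
inductive BT (C L : Type) where
  | node : C → List (BT C L) → BT C L
  | branch : (L → Option (BT C L)) → BT C L

theorem BT.strongInd {C L : Type} {P : BT C L → Prop}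
    (hn : ∀ c ts, (∀ t ∈ ts, P t) → P (BT.node c ts))
    (hb : ∀ f, (∀ l t, f l = some t → P t) → P (BT.branch f)) :
    ∀ b, P b := fun b =>
  BT.rec (motive_1 := P) (motive_2 := fun ts => ∀ t ∈ ts, P t)
    (motive_3 := fun o => ∀ t, o = some t → P t)
    (fun c ts ih => hn c ts ih)
    (fun f ih => hb f (fun l t h => ih l t h))
    (fun t h => absurd h List.not_mem_nil)
    (fun hd tl ihh ihtl t ht => by
      rcases List.mem_cons.1 ht with rfl | h'
      · exact ihh
      · exact ihtl t h')
    (fun t h => by cases h)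
    (fun v ihv t h => by cases h; exact ihv)
    b

open Classical in
theorem merge_partial_order_and_join {C L : Type}
    (merge : BT C L → BT C L → Option (BT C L))
    (h_node : ∀ (c c' : C) (ts ts' : List (BT C L)) (r : BT C L),
      merge (.node c ts) (.node c' ts') = some r ↔
        (c = c' ∧ ∃ us : List (BT C L), r = .node c us ∧
          us.length = ts.length ∧ ts'.length = ts.length ∧
          ∀ (i : ℕ) (h1 : i < ts.length) (h2 : i < ts'.length) (h3 : i < us.length),
            merge (ts.get ⟨i, h1⟩) (ts'.get ⟨i, h2⟩) = some (us.get ⟨i, h3⟩)))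
    (h_mixed : ∀ (c : C) (ts : List (BT C L)) (f : L → Option (BT C L)),
      merge (.node c ts) (.branch f) = none ∧ merge (.branch f) (.node c ts) = none)
    (h_branch : ∀ f g : L → Option (BT C L),
      merge (.branch f) (.branch g) =
        if ∀ (l : L) (a b : BT C L), f l = some a → g l = some b → (merge a b).isSome = true
        then some (.branch (fun l =>
          match f l, g l with
          | some a, some b => merge a b
          | some a, none => some a
          | none, some b => some b
          | none, none => none))
        else none)
    -- branch-inclusion preorder: B ⊑ B' iff merge B B' is defined and equals B'
    (le : BT C L → BT C L → Prop)
    (hle : ∀ A B : BT C L, le A B ↔ merge A B = some B) :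
    (∀ B : BT C L, le B B) ∧
    (∀ A B C' : BT C L, le A B → le B C' → le A C') ∧
    (∀ A B : BT C L, le A B → le B A → A = B) ∧
    (∀ A B J : BT C L, merge A B = some J →
      le A J ∧ le B J ∧ ∀ D : BT C L, le A D → le B D → le J D) := by
  -- characterization of `merge A B = some B` for node pairs
  have node_le : ∀ (c c' : C) (ts ts' : List (BT C L)),
      merge (BT.node c ts) (BT.node c' ts') = some (BT.node c' ts') ↔
        c = c' ∧ ts'.length = ts.length ∧
          ∀ (i : ℕ) (h1 : i < ts.length) (h2 : i < ts'.length),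
            merge (ts.get ⟨i, h1⟩) (ts'.get ⟨i, h2⟩) = some (ts'.get ⟨i, h2⟩) := by
    intro c c' ts ts'
    rw [h_node]
    constructor
    · rintro ⟨rfl, us, hus, hlen1, hlen2, hm⟩
      obtain ⟨rfl⟩ : ts' = us := by injection hus
      exact ⟨rfl, hlen2, fun i h1 h2 => hm i h1 h2 h2⟩
    · rintro ⟨rfl, hlen, hm⟩
      exact ⟨rfl, ts', rfl, hlen, hlen, fun i h1 h2 h3 => hm i h1 h2⟩
  -- characterization of `merge A B = some B` for branch pairs
  have branch_le : ∀ f g : L → Option (BT C L),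
      merge (BT.branch f) (BT.branch g) = some (BT.branch g) ↔
        ∀ l a, f l = some a → ∃ b, g l = some b ∧ merge a b = some b := by
    intro f g
    rw [h_branch]
    split_ifs with hc
    · constructor
      · intro h l a hfl
        have h' : (fun l => match f l, g l with
            | some a, some b => merge a b
            | some a, none => some a
            | none, some b => some b
            | none, none => none) = g := by
          injection h with h
          injection h
        have h2 := congrFun h' l
        cases hg : g l with
        | none => rw [hfl, hg] at h2; simp at h2
        | some b =>
          refine ⟨b, rfl, ?_⟩
          rw [hfl, hg] at h2
          simpa using h2
      · intro h
        congr 1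
        congr 1
        funext l
        cases hf : f l with
        | none =>
          cases hg : g l with
          | none => simp
          | some b => simp
        | some a =>
          obtain ⟨b, hg, hm⟩ := h l a hf
          rw [hg]
          simpa using hm
    · constructor
      · intro h; exact absurd h (by simp)
      · intro h
        exfalso
        apply hc
        intro l a b hfa hgb
        obtain ⟨b', hgb', hm⟩ := h l a hfa
        rw [hgb] at hgb'
        injection hgb' with hb
        subst hb
        rw [hm]; rfl
  -- reflexivity of merge
  have mrefl : ∀ B : BT C L, merge B B = some B := by
    intro B
    induction B using BT.strongInd with
    | hn c ts ih =>
      exact (node_le c c ts ts).2 ⟨rfl, rfl, fun i h1 h2 => ih _ (ts.get_mem ⟨i, h1⟩)⟩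
    | hb f ih =>
      exact (branch_le f f).2 fun l a hfl => ⟨a, hfl, ih l a hfl⟩
  -- transitivity
  have mtrans : ∀ A B Cc : BT C L,
      merge A B = some B → merge B Cc = some Cc → merge A Cc = some Cc := by
    intro A
    induction A using BT.strongInd with
    | hn c ts ih =>
      intro B Cc h1 h2
      cases B with
      | branch g => rw [(h_mixed c ts g).1] at h1; cases h1
      | node c2 ts2 =>
        cases Cc with
        | branch g => rw [(h_mixed c2 ts2 g).1] at h2; cases h2
        | node c3 ts3 =>
          obtain ⟨rfl, hl1, hm1⟩ := (node_le _ _ _ _).1 h1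
          obtain ⟨rfl, hl2, hm2⟩ := (node_le _ _ _ _).1 h2
          refine (node_le _ _ _ _).2 ⟨rfl, by omega, fun i hi1 hi2 => ?_⟩
          exact ih _ (ts.get_mem ⟨i, hi1⟩) _ _ (hm1 i hi1 (by omega))
            (hm2 i (by omega) hi2)
    | hb f ih =>
      intro B Cc h1 h2
      cases B with
      | node c2 ts2 => rw [(h_mixed c2 ts2 f).2] at h1; cases h1
      | branch g =>
        cases Cc with
        | node c3 ts3 => rw [(h_mixed c3 ts3 g).2] at h2; cases h2
        | branch hh =>
          have H1 := (branch_le f g).1 h1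
          have H2 := (branch_le g hh).1 h2
          refine (branch_le f hh).2 fun l a hfl => ?_
          obtain ⟨b, hgl, hab⟩ := H1 l a hfl
          obtain ⟨cc, hhl, hbc⟩ := H2 l b hgl
          exact ⟨cc, hhl, ih l a hfl b cc hab hbc⟩
  -- antisymmetry
  have manti : ∀ A B : BT C L, merge A B = some B → merge B A = some A → A = B := by
    intro A
    induction A using BT.strongInd with
    | hn c ts ih =>
      intro B h1 h2
      cases B with
      | branch g => rw [(h_mixed c ts g).1] at h1; cases h1
      | node c2 ts2 =>
        obtain ⟨rfl, hl1, hm1⟩ := (node_le _ _ _ _).1 h1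
        obtain ⟨-, hl2, hm2⟩ := (node_le _ _ _ _).1 h2
        have : ts = ts2 := by
          apply List.ext_get (by omega)
          intro i hi1 hi2
          exact ih _ (ts.get_mem ⟨i, hi1⟩) _ (hm1 i hi1 hi2) (hm2 i hi2 hi1)
        rw [this]
    | hb f ih =>
      intro B h1 h2
      cases B with
      | node c2 ts2 => rw [(h_mixed c2 ts2 f).2] at h1; cases h1
      | branch g =>
        have H1 := (branch_le f g).1 h1
        have H2 := (branch_le g f).1 h2
        have : f = g := by
          funext l
          cases hf : f l with
          | none =>
            cases hg : g l with
            | none => rfl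
            | some b =>
              obtain ⟨a, hfa, -⟩ := H2 l b hg
              rw [hf] at hfa; cases hfa
          | some a =>
            obtain ⟨b, hgb, hab⟩ := H1 l a hf
            obtain ⟨a', hfa', hba'⟩ := H2 l b hgb
            rw [hf] at hfa'
            injection hfa' with ha'
            subst ha'
            rw [hgb, ih l a hf b hab hba']
        rw [this]
  -- absorption: both arguments are below the merge result
  have mabsorb : ∀ A B J : BT C L,
      merge A B = some J → merge A J = some J ∧ merge B J = some J := by
    intro A
    induction A using BT.strongInd with
    | hn c ts ih =>
      intro B J h
      cases B with
      | branch g => rw [(h_mixed c ts g).1] at h; cases h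
      | node c2 ts2 =>
        obtain ⟨rfl, us, rfl, hlu, hl2, hm⟩ := (h_node _ _ _ _ _).1 h
        constructor
        · refine (node_le _ _ _ _).2 ⟨rfl, hlu, fun i h1 h2 => ?_⟩
          exact (ih _ (ts.get_mem ⟨i, h1⟩) _ _ (hm i h1 (by omega) h2)).1
        · refine (node_le _ _ _ _).2 ⟨rfl, by omega, fun i h1 h2 => ?_⟩
          exact (ih _ (ts.get_mem ⟨i, by omega⟩) _ _ (hm i (by omega) h1 h2)).2
    | hb f ih =>
      intro B J h
      cases B with
      | node c2 ts2 => rw [(h_mixed c2 ts2 f).2] at h; cases h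
      | branch g =>
        rw [h_branch] at h
        split_ifs at h with hc
        · injection h with h
          subst h
          constructor
          · refine (branch_le _ _).2 fun l a hfl => ?_
            cases hg : g l with
            | none =>
              refine ⟨a, ?_, mrefl a⟩
              simp only [hfl, hg]
            | some b =>
              obtain ⟨mm, hmm⟩ := Option.isSome_iff_exists.1 (hc l a b hfl hg)
              refine ⟨mm, ?_, (ih l a hfl b mm hmm).1⟩
              simp only [hfl, hg]
              exact hmm
          · refine (branch_le _ _).2 fun l b hgl => ?_
            cases hf : f l with
            | none =>
              refine ⟨b, ?_, mrefl b⟩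
              simp only [hf, hgl]
            | some a =>
              obtain ⟨mm, hmm⟩ := Option.isSome_iff_exists.1 (hc l a b hf hgl)
              refine ⟨mm, ?_, (ih l a hf b mm hmm).2⟩
              simp only [hf, hgl]
              exact hmm
  -- least upper bound property
  have mlub : ∀ A B J D : BT C L,
      merge A B = some J → merge A D = some D → merge B D = some D →
        merge J D = some D := by
    intro A
    induction A using BT.strongInd with
    | hn c ts ih =>
      intro B J D h hAD hBD
      cases B with
      | branch g => rw [(h_mixed c ts g).1] at h; cases h
      | node c2 ts2 =>
        obtain ⟨rfl, us, rfl, hlu, hl2, hm⟩ := (h_node _ _ _ _ _).1 h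
        cases D with
        | branch d => rw [(h_mixed c ts d).1] at hAD; cases hAD
        | node c4 ds =>
          obtain ⟨rfl, hld, hmAD⟩ := (node_le _ _ _ _).1 hAD
          obtain ⟨-, hld2, hmBD⟩ := (node_le _ _ _ _).1 hBD
          refine (node_le _ _ _ _).2 ⟨rfl, by omega, fun i h1 h2 => ?_⟩
          exact ih _ (ts.get_mem ⟨i, by omega⟩) _ _ _
            (hm i (by omega) (by omega) h1) (hmAD i (by omega) h2)
            (hmBD i (by omega) h2)
    | hb f ih =>
      intro B J D h hAD hBD
      cases B with
      | node c2 ts2 => rw [(h_mixed c2 ts2 f).2] at h; cases h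
      | branch g =>
        rw [h_branch] at h
        split_ifs at h with hc
        · injection h with h
          subst h
          cases D with
          | node c4 ds => rw [(h_mixed c4 ds f).2] at hAD; cases hAD
          | branch d =>
            have HAD := (branch_le f d).1 hAD
            have HBD := (branch_le g d).1 hBD
            refine (branch_le _ _).2 fun l x hml => ?_
            cases hf : f l with
            | none =>
              cases hg : g l with
              | none => simp only [hf, hg] at hml; cases hml
              | some b =>
                simp only [hf, hg] at hml
                injection hml with hx
                subst hx
                exact HBD l b hg
            | some a =>
              cases hg : g l with
              | none =>
                simp only [hf, hg] at hml
                injection hml with hx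
                subst hx
                exact HAD l a hf
              | some b =>
                simp only [hf, hg] at hml
                obtain ⟨e, hdl, hae⟩ := HAD l a hf
                obtain ⟨e', hdl', hbe⟩ := HBD l b hg
                rw [hdl] at hdl'
                injection hdl' with he
                subst he
                exact ⟨e, hdl, ih l a hf b x e hml hae hbe⟩
  refine ⟨fun B => (hle B B).2 (mrefl B),
    fun A B Cc h1 h2 => (hle A Cc).2 (mtrans A B Cc ((hle A B).1 h1) ((hle B Cc).1 h2)),
    fun A B h1 h2 => manti A B ((hle A B).1 h1) ((hle B A).1 h2),
    fun A B J h => ?_⟩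
  obtain ⟨hAJ, hBJ⟩ := mabsorb A B J h
  exact ⟨(hle A J).2 hAJ, (hle B J).2 hBJ,
    fun D hAD hBD => (hle J D).2 (mlub A B J D h ((hle A D).1 hAD) ((hle B D).1 hBD))⟩
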